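/- Let ν be a Lévy measure on ℝ^d, let γ ∈ (0,1] with ∫_{{|y| ≤ 1}} |y|^{1+γ} ν(dy) < ∞, and let b : ℝ^d → ℝ^d be bounded and continuous. Let λ > 0 and let g : ℝ^d → ℝ be bounded and continuous. If v ∈ C_b^{1+γ}(ℝ^d) satisfies λ v(x) − ℒv(x) − ⟨b(x), Dv(x)⟩ = g(x) for every x ∈ ℝ^d, then sup_x |v(x)| ≤ (1/λ) sup_x |g(x)|. -/

import Mathlib

open Filter Topology
open scoped RealInnerProductSpace


open MeasureTheory
open scoped ENNReal

noncomputable section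

/-- A Lévy measure on `ℝ^d`: σ-finite, no mass at `0`, and `∫ min(1,|y|²) ν(dy) < ∞`. -/
def IsLevyMeasure {d : ℕ} (ν : Measure (EuclideanSpace ℝ (Fin d))) : Prop :=
  SigmaFinite ν ∧ ν {0} = 0 ∧
    (∫⁻ y, ENNReal.ofReal (min 1 (‖y‖ ^ 2)) ∂ν) < ⊤

/-- The nonlocal operator `ℒg(x) = ∫ (g(x+y) - g(x) - 1_{|y|≤1}(y) ⟨y, Dg(x)⟩) ν(dy)`. -/
def nonlocalOp {d : ℕ} (ν : Measure (EuclideanSpace ℝ (Fin d)))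
    (g : EuclideanSpace ℝ (Fin d) → ℝ) (x : EuclideanSpace ℝ (Fin d)) : ℝ :=
  ∫ y, (g (x + y) - g x -
    Set.indicator {y : EuclideanSpace ℝ (Fin d) | ‖y‖ ≤ 1}
      (fun y => fderiv ℝ g x y) y) ∂ν

variable {d : ℕ}

private lemma taylor_bound {γ C : ℝ} (hγ : 0 < γ) (hC0 : 0 ≤ C)
    (v : EuclideanSpace ℝ (Fin d) → ℝ) (hv : ContDiff ℝ 1 v)
    (hC : ∀ x y, ‖fderiv ℝ v x - fderiv ℝ v y‖ ≤ C * ‖x - y‖ ^ γ)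
    (x y : EuclideanSpace ℝ (Fin d)) :
    |v (x + y) - v x - fderiv ℝ v x y| ≤ C * ‖y‖ ^ (1 + γ) := by
  have hdiff : ∀ z ∈ Metric.closedBall x ‖y‖, DifferentiableAt ℝ v z :=
    fun z _ => (hv.differentiable one_ne_zero) z
  have hbound : ∀ z ∈ Metric.closedBall x ‖y‖,
      ‖fderiv ℝ v z - fderiv ℝ v x‖ ≤ C * ‖y‖ ^ γ := by
    intro z hz
    refine (hC z x).trans ?_
    have h1 : ‖z - x‖ ≤ ‖y‖ := by
      simpa [dist_eq_norm] using hz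
    exact mul_le_mul_of_nonneg_left (Real.rpow_le_rpow (norm_nonneg _) h1 hγ.le) hC0
  have hmem : x + y ∈ Metric.closedBall x ‖y‖ := by
    simp [Metric.mem_closedBall, dist_eq_norm]
  have key := (convex_closedBall x ‖y‖).norm_image_sub_le_of_norm_fderiv_le'
    hdiff hbound (Metric.mem_closedBall_self (norm_nonneg y)) hmem
  have h2 : x + y - x = y := by abel
  rw [h2] at key
  calc |v (x + y) - v x - fderiv ℝ v x y| ≤ C * ‖y‖ ^ γ * ‖y‖ := key
    _ = C * ‖y‖ ^ (1 + γ) := by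
        rw [Real.rpow_add' (norm_nonneg y) (by positivity), Real.rpow_one]; ring

private lemma tail_finite (ν : Measure (EuclideanSpace ℝ (Fin d)))
    (hν₃ : (∫⁻ y, ENNReal.ofReal (min 1 (‖y‖ ^ 2)) ∂ν) < ⊤) :
    ν {y : EuclideanSpace ℝ (Fin d) | 1 < ‖y‖} < ⊤ := by
  have hs : MeasurableSet {y : EuclideanSpace ℝ (Fin d) | 1 < ‖y‖} :=
    (isOpen_lt continuous_const continuous_norm).measurableSet
  have h1 : ν {y : EuclideanSpace ℝ (Fin d) | 1 < ‖y‖}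
      = ∫⁻ y in {y : EuclideanSpace ℝ (Fin d) | 1 < ‖y‖}, 1 ∂ν := by
    rw [setLIntegral_one]
  rw [h1]
  calc ∫⁻ y in {y : EuclideanSpace ℝ (Fin d) | 1 < ‖y‖}, 1 ∂ν
      ≤ ∫⁻ y in {y : EuclideanSpace ℝ (Fin d) | 1 < ‖y‖},
          ENNReal.ofReal (min 1 (‖y‖ ^ 2)) ∂ν := by
        refine setLIntegral_mono (by fun_prop) ?_
        intro y hy
        have : (1:ℝ) ≤ ‖y‖ ^ 2 := by
          have : (1:ℝ) ≤ ‖y‖ := le_of_lt hy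
          nlinarith
        rw [min_eq_left this]
        simp
    _ ≤ ∫⁻ y, ENNReal.ofReal (min 1 (‖y‖ ^ 2)) ∂ν := setLIntegral_le_lintegral _ _
    _ < ⊤ := hν₃

private lemma ball_set_meas :
    MeasurableSet {y : EuclideanSpace ℝ (Fin d) | ‖y‖ ≤ 1} :=
  (isClosed_le continuous_norm continuous_const).measurableSet

private lemma mom_integrable {γ : ℝ} (hγ : 0 < γ)
    (ν : Measure (EuclideanSpace ℝ (Fin d)))
    (hmom : (∫⁻ y in {y : EuclideanSpace ℝ (Fin d) | ‖y‖ ≤ 1},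
      ENNReal.ofReal (‖y‖ ^ (1 + γ)) ∂ν) < ⊤) :
    Integrable (Set.indicator {y : EuclideanSpace ℝ (Fin d) | ‖y‖ ≤ 1}
      (fun y => ‖y‖ ^ (1 + γ))) ν := by
  rw [integrable_indicator_iff ball_set_meas]
  constructor
  · refine ((continuous_norm.rpow_const ?_).aestronglyMeasurable).restrict
    intro y; right; positivity
  · rw [hasFiniteIntegral_iff_ofReal]
    · exact hmom
    · filter_upwards with y
      positivity

private lemma sq_integrable {γ : ℝ} (hγ1 : 0 < γ) (hγ2 : γ ≤ 1)
    (ν : Measure (EuclideanSpace ℝ (Fin d)))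
    (hmom : (∫⁻ y in {y : EuclideanSpace ℝ (Fin d) | ‖y‖ ≤ 1},
      ENNReal.ofReal (‖y‖ ^ (1 + γ)) ∂ν) < ⊤) :
    Integrable (Set.indicator {y : EuclideanSpace ℝ (Fin d) | ‖y‖ ≤ 1}
      (fun y => ‖y‖ ^ (2:ℕ))) ν := by
  refine Integrable.mono' (mom_integrable hγ1 ν hmom) ?_ ?_
  · exact (((continuous_norm.pow 2).stronglyMeasurable).indicator
      ball_set_meas).aestronglyMeasurable
  · filter_upwards with y
    rw [Real.norm_eq_abs, abs_of_nonneg (Set.indicator_nonneg (fun y _ => by positivity) y)]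
    by_cases hy : y ∈ {y : EuclideanSpace ℝ (Fin d) | ‖y‖ ≤ 1}
    · rw [Set.indicator_of_mem hy, Set.indicator_of_mem hy]
      rcases eq_or_lt_of_le (norm_nonneg y) with h0 | h0
      · rw [← h0]
        rw [Real.zero_rpow (by positivity)]
        norm_num
      · calc ‖y‖ ^ (2:ℕ) = ‖y‖ ^ ((2:ℕ):ℝ) := by
              rw [Real.rpow_natCast]
          _ ≤ ‖y‖ ^ (1 + γ) := by
              refine Real.rpow_le_rpow_of_exponent_ge h0 hy ?_
              push_cast; linarith
    · rw [Set.indicator_of_notMem hy, Set.indicator_of_notMem hy]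

private lemma integrand_integrable {γ C Mv : ℝ} (hγ1 : 0 < γ) (hC0 : 0 ≤ C)
    (ν : Measure (EuclideanSpace ℝ (Fin d)))
    (hν₃ : (∫⁻ y, ENNReal.ofReal (min 1 (‖y‖ ^ 2)) ∂ν) < ⊤)
    (hmom : (∫⁻ y in {y : EuclideanSpace ℝ (Fin d) | ‖y‖ ≤ 1},
      ENNReal.ofReal (‖y‖ ^ (1 + γ)) ∂ν) < ⊤)
    (v : EuclideanSpace ℝ (Fin d) → ℝ) (hv : ContDiff ℝ 1 v)
    (hMv : ∀ x, |v x| ≤ Mv)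
    (hC : ∀ x y, ‖fderiv ℝ v x - fderiv ℝ v y‖ ≤ C * ‖x - y‖ ^ γ)
    (x : EuclideanSpace ℝ (Fin d)) :
    Integrable (fun y => v (x + y) - v x -
      Set.indicator {y : EuclideanSpace ℝ (Fin d) | ‖y‖ ≤ 1}
        (fun y => fderiv ℝ v x y) y) ν := by
  have hcompl : {y : EuclideanSpace ℝ (Fin d) | ‖y‖ ≤ 1}ᶜ
      = {y : EuclideanSpace ℝ (Fin d) | 1 < ‖y‖} := by
    ext y; simp [not_le]
  set G : EuclideanSpace ℝ (Fin d) → ℝ := fun y =>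
    Set.indicator {y : EuclideanSpace ℝ (Fin d) | ‖y‖ ≤ 1}
      (fun y => C * ‖y‖ ^ (1 + γ)) y +
    Set.indicator {y : EuclideanSpace ℝ (Fin d) | ‖y‖ ≤ 1}ᶜ (fun _ => 2 * Mv) y with hG
  have hGint : Integrable G ν := by
    refine Integrable.add ?_ ?_
    · have h1 : (Set.indicator {y : EuclideanSpace ℝ (Fin d) | ‖y‖ ≤ 1}
          (fun y => C * ‖y‖ ^ (1 + γ)))
          = fun y => C * Set.indicator {y : EuclideanSpace ℝ (Fin d) | ‖y‖ ≤ 1}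
            (fun y => ‖y‖ ^ (1 + γ)) y := by
        funext y
        by_cases hy : y ∈ {y : EuclideanSpace ℝ (Fin d) | ‖y‖ ≤ 1} <;>
          simp [Set.indicator, hy]
      rw [h1]
      exact (mom_integrable hγ1 ν hmom).const_mul C
    · rw [integrable_indicator_iff ball_set_meas.compl, hcompl]
      rw [integrableOn_const_iff]
      exact Or.inr (tail_finite ν hν₃)
  refine Integrable.mono' hGint ?_ ?_
  · refine AEStronglyMeasurable.sub ?_ ?_
    · exact ((hv.continuous.comp (continuous_const.add continuous_id)).sub
        continuous_const).aestronglyMeasurable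
    · exact (((fderiv ℝ v x).continuous.stronglyMeasurable).indicator
        ball_set_meas).aestronglyMeasurable
  · filter_upwards with y
    by_cases hy : y ∈ {y : EuclideanSpace ℝ (Fin d) | ‖y‖ ≤ 1}
    · rw [Set.indicator_of_mem hy, hG]
      simp only []
      rw [Set.indicator_of_mem hy, Set.indicator_of_notMem (by simp [hy] : y ∉ _)]
      rw [add_zero, Real.norm_eq_abs]
      exact taylor_bound hγ1 hC0 v hv hC x y
    · rw [Set.indicator_of_notMem hy, hG]
      simp only []
      rw [Set.indicator_of_notMem hy, Set.indicator_of_mem (by simp [hy] : y ∈ _)]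
      rw [zero_add, Real.norm_eq_abs, sub_zero]
      have h1 := hMv (x + y)
      have h2 := hMv x
      rw [abs_le] at h1 h2
      rw [abs_le]
      constructor <;> linarith


set_option maxHeartbeats 1000000 in
private lemma key_bound {γ C Mv Mb S : ℝ} (hγ1 : 0 < γ) (hγ2 : γ ≤ 1)
    (ν : Measure (EuclideanSpace ℝ (Fin d)))
    (hν₃ : (∫⁻ y, ENNReal.ofReal (min 1 (‖y‖ ^ 2)) ∂ν) < ⊤)
    (hmom : (∫⁻ y in {y : EuclideanSpace ℝ (Fin d) | ‖y‖ ≤ 1},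
      ENNReal.ofReal (‖y‖ ^ (1 + γ)) ∂ν) < ⊤)
    (b : EuclideanSpace ℝ (Fin d) → EuclideanSpace ℝ (Fin d))
    (hMb : ∀ x, ‖b x‖ ≤ Mb)
    (lam : ℝ) (hlam : 0 < lam)
    (g : EuclideanSpace ℝ (Fin d) → ℝ) (hgS : ∀ z, g z ≤ S)
    (v : EuclideanSpace ℝ (Fin d) → ℝ) (hv : ContDiff ℝ 1 v)
    (hMv : ∀ x, |v x| ≤ Mv) (hC0 : 0 ≤ C)
    (hC : ∀ x y, ‖fderiv ℝ v x - fderiv ℝ v y‖ ≤ C * ‖x - y‖ ^ γ)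
    (heq : ∀ x, lam * v x - nonlocalOp ν v x - fderiv ℝ v x (b x) = g x)
    (δ : ℝ) (hδ : 0 < δ) (R : ℝ) (hR1 : 1 ≤ R)
    (x : EuclideanSpace ℝ (Fin d)) :
    lam * v x ≤ S + lam * δ * ‖x‖ ^ 2
      + δ * (∫ y in {y : EuclideanSpace ℝ (Fin d) | ‖y‖ ≤ 1}, ‖y‖ ^ (2:ℕ) ∂ν)
      + (2 * Real.sqrt (2 * Mv * δ) * R + δ * R ^ 2)
          * (ν {y : EuclideanSpace ℝ (Fin d) | 1 < ‖y‖}).toReal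
      + 2 * Mv * (ν {y : EuclideanSpace ℝ (Fin d) | R < ‖y‖}).toReal
      + 2 * Real.sqrt (2 * Mv * δ) * Mb := by
  have hMv0 : 0 ≤ Mv := (abs_nonneg _).trans (hMv 0)
  -- existence of a maximum point of z ↦ v z - δ‖z‖²
  set f : EuclideanSpace ℝ (Fin d) → ℝ := fun z => v z - δ * ‖z‖ ^ 2 with hf
  obtain ⟨x₀, hx₀⟩ : ∃ x₀, ∀ z, f z ≤ f x₀ := by
    refine Continuous.exists_forall_ge ?_ ?_
    · exact hv.continuous.sub (continuous_const.mul (continuous_norm.pow 2))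
    · have h1 : Tendsto (fun z : EuclideanSpace ℝ (Fin d) => Mv - δ * ‖z‖ ^ 2)
          (cocompact _) atBot := by
        have h3 : Tendsto (fun t : ℝ => -(δ * t ^ 2)) atTop atBot :=
          tendsto_neg_atTop_atBot.comp
            ((tendsto_pow_atTop (two_ne_zero)).const_mul_atTop hδ)
        have h2 : Tendsto (fun t : ℝ => Mv - δ * t ^ 2) atTop atBot := by
          simpa [sub_eq_add_neg] using tendsto_atBot_add_const_left atTop Mv h3
        exact h2.comp tendsto_norm_cocompact_atTop
      refine tendsto_atBot_mono (fun z => ?_) h1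
      have := hMv z
      rw [abs_le] at this
      simp only [hf]
      linarith [this.2]
  -- derivative at the max point
  have hvd : HasFDerivAt v (fderiv ℝ v x₀) x₀ := (hv.differentiable one_ne_zero x₀).hasFDerivAt
  have hφ : HasFDerivAt (fun z : EuclideanSpace ℝ (Fin d) => ‖z‖ ^ 2)
      (2 • (innerSL ℝ x₀)) x₀ := (hasStrictFDerivAt_norm_sq x₀).hasFDerivAt
  have hfd : HasFDerivAt f (fderiv ℝ v x₀ - δ • (2 • (innerSL ℝ x₀))) x₀ :=
    hvd.sub (hφ.const_mul δ)
  have hmax : IsLocalMax f x₀ := Filter.Eventually.of_forall hx₀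
  have hDv : fderiv ℝ v x₀ = δ • (2 • (innerSL ℝ x₀)) := by
    have h0 := hmax.hasFDerivAt_eq_zero hfd
    rwa [sub_eq_zero] at h0
  have hDvap : ∀ z, fderiv ℝ v x₀ z = δ * (2 * ⟪x₀, z⟫) := by
    intro z
    rw [hDv]
    simp [two_smul]
    ring
  -- bound on ‖x₀‖
  have hx₀sq : δ * ‖x₀‖ ^ 2 ≤ 2 * Mv := by
    have h1 := hx₀ 0
    simp only [hf, norm_zero] at h1
    have h2 := (abs_le.1 (hMv 0))
    have h3 := (abs_le.1 (hMv x₀))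
    nlinarith
  have hsqrt : δ * ‖x₀‖ ≤ Real.sqrt (2 * Mv * δ) := by
    refine Real.le_sqrt_of_sq_le ?_
    have : (δ * ‖x₀‖) ^ 2 = δ * (δ * ‖x₀‖ ^ 2) := by ring
    rw [this]
    calc δ * (δ * ‖x₀‖ ^ 2) ≤ δ * (2 * Mv) := by
          exact mul_le_mul_of_nonneg_left hx₀sq hδ.le
      _ = 2 * Mv * δ := by ring
  have hsqrt0 : 0 ≤ Real.sqrt (2 * Mv * δ) := Real.sqrt_nonneg _
  -- the maximum inequality
  have hmaxineq : ∀ y, v (x₀ + y) - v x₀ ≤ δ * (2 * ⟪x₀, y⟫ + ‖y‖ ^ 2) := by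
    intro y
    have h1 := hx₀ (x₀ + y)
    simp only [hf] at h1
    have h2 : ‖x₀ + y‖ ^ 2 = ‖x₀‖ ^ 2 + 2 * ⟪x₀, y⟫ + ‖y‖ ^ 2 := norm_add_sq_real x₀ y
    nlinarith [h1, h2]
  -- the comparison function B and its integral
  set s1 : Set (EuclideanSpace ℝ (Fin d)) := {y | ‖y‖ ≤ 1} with hs1
  set s2 : Set (EuclideanSpace ℝ (Fin d)) := {y | 1 < ‖y‖ ∧ ‖y‖ ≤ R} with hs2
  set s3 : Set (EuclideanSpace ℝ (Fin d)) := {y | R < ‖y‖} with hs3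
  have hs2m : MeasurableSet s2 :=
    ((isOpen_lt continuous_const continuous_norm).measurableSet).inter
      (isClosed_le continuous_norm continuous_const).measurableSet
  have hs3m : MeasurableSet s3 :=
    (isOpen_lt continuous_const continuous_norm).measurableSet
  have htail := tail_finite ν hν₃
  have hs2sub : s2 ⊆ {y : EuclideanSpace ℝ (Fin d) | 1 < ‖y‖} := fun y hy => hy.1
  have hs3sub : s3 ⊆ {y : EuclideanSpace ℝ (Fin d) | 1 < ‖y‖} := fun y hy =>
    lt_of_lt_of_le (lt_of_le_of_lt hR1 hy) le_rfl
  set c2 : ℝ := δ * (2 * ‖x₀‖ * R + R ^ 2) with hc2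
  set B : EuclideanSpace ℝ (Fin d) → ℝ := fun y =>
    δ * Set.indicator s1 (fun y => ‖y‖ ^ (2:ℕ)) y
    + c2 * Set.indicator s2 (fun _ => (1:ℝ)) y
    + (2 * Mv) * Set.indicator s3 (fun _ => (1:ℝ)) y with hB
  have hB1 : Integrable (fun y => δ * Set.indicator s1
      (fun y : EuclideanSpace ℝ (Fin d) => ‖y‖ ^ (2:ℕ)) y) ν :=
    (sq_integrable hγ1 hγ2 ν hmom).const_mul δ
  have hB2 : Integrable (fun y => c2 * Set.indicator s2 (fun _ => (1:ℝ)) y) ν := by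
    refine Integrable.const_mul ?_ c2
    rw [integrable_indicator_iff hs2m, integrableOn_const_iff]
    exact Or.inr ((measure_mono hs2sub).trans_lt htail)
  have hB3 : Integrable (fun y => (2 * Mv) * Set.indicator s3 (fun _ => (1:ℝ)) y) ν := by
    refine Integrable.const_mul ?_ _
    rw [integrable_indicator_iff hs3m, integrableOn_const_iff]
    exact Or.inr ((measure_mono hs3sub).trans_lt htail)
  have hBint : Integrable B ν := (hB1.add hB2).add hB3
  -- the integrand of the nonlocal operator
  set I : EuclideanSpace ℝ (Fin d) → ℝ := fun y => v (x₀ + y) - v x₀ -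
      Set.indicator {y : EuclideanSpace ℝ (Fin d) | ‖y‖ ≤ 1}
        (fun y => fderiv ℝ v x₀ y) y with hI
  have hIint : Integrable I ν :=
    integrand_integrable hγ1 hC0 ν hν₃ hmom v hv hMv hC x₀
  -- pointwise comparison
  have hIB : ∀ y, I y ≤ B y := by
    intro y
    rcases le_or_gt ‖y‖ 1 with h1 | h1
    · have hy1 : y ∈ s1 := h1
      have hy2 : y ∉ s2 := fun hy => absurd h1 (not_le.2 hy.1)
      have hy3 : y ∉ s3 := fun hy => absurd (le_trans h1 hR1) (not_le.2 hy)
      simp only [hI, hB, Set.indicator_of_mem hy1, Set.indicator_of_notMem hy2,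
        Set.indicator_of_mem (show y ∈ {y : EuclideanSpace ℝ (Fin d) | ‖y‖ ≤ 1} from hy1),
        Set.indicator_of_notMem hy3, mul_zero, add_zero]
      have h2 := hmaxineq y
      have h3 := hDvap y
      rw [h3]
      nlinarith
    · have hy1 : y ∉ s1 := not_le.2 h1
      rcases le_or_gt ‖y‖ R with h2 | h2
      · have hy2 : y ∈ s2 := ⟨h1, h2⟩
        have hy3 : y ∉ s3 := fun hy => absurd h2 (not_le.2 hy)
        simp only [hI, hB, Set.indicator_of_notMem hy1,
          Set.indicator_of_notMem (show y ∉ {y : EuclideanSpace ℝ (Fin d) | ‖y‖ ≤ 1} from hy1), Set.indicator_of_mem hy2,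
          Set.indicator_of_notMem hy3, mul_zero, add_zero, mul_one, sub_zero, zero_add,
          mul_zero, add_zero]
        have h3 := hmaxineq y
        have h4 : ⟪x₀, y⟫ ≤ ‖x₀‖ * ‖y‖ := real_inner_le_norm x₀ y
        have h5 : (0:ℝ) ≤ ‖y‖ := norm_nonneg y
        have h6 : (0:ℝ) ≤ ‖x₀‖ := norm_nonneg x₀
        simp only [hc2]
        have h7 : ‖y‖ ^ 2 ≤ R ^ 2 := by nlinarith
        have h8 : ‖x₀‖ * ‖y‖ ≤ ‖x₀‖ * R := mul_le_mul_of_nonneg_left h2 h6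
        have h9 : δ * (2 * ⟪x₀, y⟫ + ‖y‖ ^ 2) ≤ δ * (2 * ‖x₀‖ * R + R ^ 2) := by
          refine mul_le_mul_of_nonneg_left ?_ hδ.le
          linarith
        linarith
      · have hy3 : y ∈ s3 := h2
        have hy2 : y ∉ s2 := fun hy => absurd hy.2 (not_le.2 h2)
        simp only [hI, hB, Set.indicator_of_notMem hy1,
          Set.indicator_of_notMem (show y ∉ {y : EuclideanSpace ℝ (Fin d) | ‖y‖ ≤ 1} from hy1), Set.indicator_of_notMem hy2,
          Set.indicator_of_mem hy3, mul_zero, add_zero, mul_one, sub_zero, zero_add]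
        have h3 := abs_le.1 (hMv (x₀ + y))
        have h4 := abs_le.1 (hMv x₀)
        linarith [h3.1, h3.2, h4.1, h4.2]
  -- integral of B
  have hintB : ∫ y, B y ∂ν = δ * (∫ y in s1, ‖y‖ ^ (2:ℕ) ∂ν)
      + c2 * (ν s2).toReal + (2 * Mv) * (ν s3).toReal := by
    have e1 : (∫ y, B y ∂ν)
        = (∫ y, (δ * Set.indicator s1 (fun y => ‖y‖ ^ (2:ℕ)) y
            + c2 * Set.indicator s2 (fun _ => (1:ℝ)) y) ∂ν)
          + ∫ y, (2 * Mv) * Set.indicator s3 (fun _ => (1:ℝ)) y ∂ν :=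
      integral_add (hB1.add hB2) hB3
    have e2 : (∫ y, (δ * Set.indicator s1 (fun y => ‖y‖ ^ (2:ℕ)) y
            + c2 * Set.indicator s2 (fun _ => (1:ℝ)) y) ∂ν)
        = (∫ y, δ * Set.indicator s1 (fun y => ‖y‖ ^ (2:ℕ)) y ∂ν)
          + ∫ y, c2 * Set.indicator s2 (fun _ => (1:ℝ)) y ∂ν :=
      integral_add hB1 hB2
    rw [e1, e2, integral_const_mul, integral_const_mul, integral_const_mul,
      integral_indicator ball_set_meas, integral_indicator hs2m, integral_indicator hs3m,
      setIntegral_const, setIntegral_const, smul_eq_mul, smul_eq_mul, mul_one, mul_one]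
    rfl
  -- conclude
  have hR0 : (0:ℝ) ≤ R := by linarith
  have hmono : nonlocalOp ν v x₀ ≤ ∫ y, B y ∂ν := integral_mono hIint hBint hIB
  have heq₀ := heq x₀
  have hMb0 : 0 ≤ Mb := le_trans (norm_nonneg _) (hMb x₀)
  have hdrift : fderiv ℝ v x₀ (b x₀) ≤ 2 * Real.sqrt (2 * Mv * δ) * Mb := by
    rw [hDvap (b x₀)]
    have h1 : ⟪x₀, b x₀⟫ ≤ ‖x₀‖ * ‖b x₀‖ := real_inner_le_norm _ _
    have h2 : ‖b x₀‖ ≤ Mb := hMb x₀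
    have h3 : (0:ℝ) ≤ ‖x₀‖ := norm_nonneg _
    have a1 := mul_le_mul_of_nonneg_left h1 hδ.le
    have a2 := mul_le_mul_of_nonneg_left (mul_le_mul_of_nonneg_left h2 h3) hδ.le
    have a3 := mul_le_mul_of_nonneg_right hsqrt hMb0
    nlinarith [a1, a2, a3]
  have hc2le : c2 * (ν s2).toReal ≤ (2 * Real.sqrt (2 * Mv * δ) * R + δ * R ^ 2)
      * (ν {y : EuclideanSpace ℝ (Fin d) | 1 < ‖y‖}).toReal := by
    have hm1 : (ν s2).toReal ≤ (ν {y : EuclideanSpace ℝ (Fin d) | 1 < ‖y‖}).toReal :=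
      ENNReal.toReal_mono htail.ne (measure_mono hs2sub)
    have hm0 : (0:ℝ) ≤ (ν s2).toReal := ENNReal.toReal_nonneg
    have hc2nn : 0 ≤ c2 := by
      have h6 : (0:ℝ) ≤ ‖x₀‖ := norm_nonneg _
      simp only [hc2]
      nlinarith [mul_nonneg (mul_nonneg h6 hR0) hδ.le, sq_nonneg R, hδ.le,
        mul_nonneg (sq_nonneg R) hδ.le]
    have hc2b : c2 ≤ 2 * Real.sqrt (2 * Mv * δ) * R + δ * R ^ 2 := by
      have a4 := mul_le_mul_of_nonneg_right hsqrt hR0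
      simp only [hc2]
      nlinarith
    exact mul_le_mul hc2b hm1 hm0 (le_trans hc2nn hc2b)
  have hvx : v x - δ * ‖x‖ ^ 2 ≤ v x₀ := by
    have h1 := hx₀ x
    simp only [hf] at h1
    have h2 : 0 ≤ δ * ‖x₀‖ ^ 2 := by positivity
    linarith
  have hfin : lam * v x ≤ lam * v x₀ + lam * δ * ‖x‖ ^ 2 := by
    have := mul_le_mul_of_nonneg_left hvx hlam.le
    nlinarith
  have hg₀ := hgS x₀
  linarith [hfin, heq₀, hmono, hintB, hc2le, hdrift, hg₀]

set_option maxHeartbeats 1000000 in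
private lemma one_side {γ : ℝ} (hγ1 : 0 < γ) (hγ2 : γ ≤ 1)
    (ν : Measure (EuclideanSpace ℝ (Fin d)))
    (hν₃ : (∫⁻ y, ENNReal.ofReal (min 1 (‖y‖ ^ 2)) ∂ν) < ⊤)
    (hmom : (∫⁻ y in {y : EuclideanSpace ℝ (Fin d) | ‖y‖ ≤ 1},
      ENNReal.ofReal (‖y‖ ^ (1 + γ)) ∂ν) < ⊤)
    (b : EuclideanSpace ℝ (Fin d) → EuclideanSpace ℝ (Fin d))
    (hbB : ∃ M, ∀ x, ‖b x‖ ≤ M)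
    (lam : ℝ) (hlam : 0 < lam)
    (g : EuclideanSpace ℝ (Fin d) → ℝ) (hgB : ∃ M, ∀ x, |g x| ≤ M)
    (v : EuclideanSpace ℝ (Fin d) → ℝ)
    (hv : ContDiff ℝ 1 v) (hvb : ∃ M, ∀ x, |v x| ≤ M)
    (hDvH : ∃ C, 0 ≤ C ∧ ∀ x y, ‖fderiv ℝ v x - fderiv ℝ v y‖ ≤ C * ‖x - y‖ ^ γ)
    (heq : ∀ x, lam * v x - nonlocalOp ν v x - fderiv ℝ v x (b x) = g x) :
    ∀ x, lam * v x ≤ ⨆ x, |g x| := by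
  obtain ⟨C, hC0, hC⟩ := hDvH
  obtain ⟨Mv, hMv⟩ := hvb
  obtain ⟨Mb, hMb⟩ := hbB
  obtain ⟨Mg, hMg⟩ := hgB
  have hMv0 : 0 ≤ Mv := (abs_nonneg _).trans (hMv 0)
  have hMb0 : 0 ≤ Mb := (norm_nonneg _).trans (hMb 0)
  have hbdd : BddAbove (Set.range fun z => |g z|) := by
    refine ⟨Mg, ?_⟩
    rintro _ ⟨z, rfl⟩
    exact hMg z
  have hgS : ∀ z, g z ≤ ⨆ z, |g z| := fun z => (le_abs_self _).trans (le_ciSup hbdd z)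
  intro x
  refine le_of_forall_pos_le_add (fun ε hε => ?_)
  -- choose the truncation radius R
  have htail := tail_finite ν hν₃
  obtain ⟨n, hn⟩ : ∃ n : ℕ,
      ν {y : EuclideanSpace ℝ (Fin d) | (n : ℝ) < ‖y‖}
        < ENNReal.ofReal (ε / 2 / (2 * Mv + 1)) := by
    have hanti : Antitone (fun n : ℕ => {y : EuclideanSpace ℝ (Fin d) | (n : ℝ) < ‖y‖}) := by
      intro m n hmn y hy
      have hy' : (n : ℝ) < ‖y‖ := hy
      exact lt_of_le_of_lt (by exact_mod_cast hmn) hy'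
    have hmeas : ∀ n : ℕ,
        NullMeasurableSet {y : EuclideanSpace ℝ (Fin d) | (n : ℝ) < ‖y‖} ν := fun n =>
      ((isOpen_lt continuous_const continuous_norm).measurableSet).nullMeasurableSet
    have hfin : ∃ n : ℕ, ν {y : EuclideanSpace ℝ (Fin d) | (n : ℝ) < ‖y‖} ≠ ⊤ := by
      refine ⟨1, ?_⟩
      have : {y : EuclideanSpace ℝ (Fin d) | ((1:ℕ) : ℝ) < ‖y‖}
          = {y : EuclideanSpace ℝ (Fin d) | 1 < ‖y‖} := by norm_num
      rw [this]
      exact htail.ne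
    have hiInter : ⋂ n : ℕ, {y : EuclideanSpace ℝ (Fin d) | (n : ℝ) < ‖y‖} = ∅ := by
      ext y
      simp only [Set.mem_iInter, Set.mem_setOf_eq, Set.mem_empty_iff_false, iff_false,
        not_forall, not_lt]
      obtain ⟨n, hn⟩ := exists_nat_ge ‖y‖
      exact ⟨n, hn⟩
    have ht := tendsto_measure_iInter_atTop hmeas hanti hfin
    rw [hiInter, measure_empty] at ht
    have hpos : (0 : ℝ≥0∞) < ENNReal.ofReal (ε / 2 / (2 * Mv + 1)) :=
      ENNReal.ofReal_pos.2 (by positivity)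
    exact (ht.eventually (gt_mem_nhds hpos)).exists
  set R : ℝ := max (n : ℝ) 1 with hRdef
  have hR1 : 1 ≤ R := le_max_right _ _
  have hR0 : 0 ≤ R := by linarith
  have hνR : (ν {y : EuclideanSpace ℝ (Fin d) | R < ‖y‖}).toReal ≤ ε / 2 / (2 * Mv + 1) := by
    refine ENNReal.toReal_le_of_le_ofReal (by positivity) ?_
    refine le_trans (measure_mono ?_) hn.le
    intro y hy
    have hy' : R < ‖y‖ := hy
    exact lt_of_le_of_lt (le_max_left _ _) hy'
  -- constants
  set K₁ : ℝ := ∫ y in {y : EuclideanSpace ℝ (Fin d) | ‖y‖ ≤ 1}, ‖y‖ ^ (2:ℕ) ∂ν with hK₁def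
  have hK₁0 : 0 ≤ K₁ := by
    rw [hK₁def]
    exact setIntegral_nonneg ball_set_meas (fun y _ => by positivity)
  set ν₁ : ℝ := (ν {y : EuclideanSpace ℝ (Fin d) | 1 < ‖y‖}).toReal with hν₁def
  have hν₁0 : 0 ≤ ν₁ := ENNReal.toReal_nonneg
  set A : ℝ := lam * ‖x‖ ^ 2 + K₁ + 2 * Real.sqrt (2 * Mv) * R * ν₁ + R ^ 2 * ν₁
      + 2 * Real.sqrt (2 * Mv) * Mb with hAdef
  have hA0 : 0 ≤ A := by
    have h1 : (0:ℝ) ≤ lam * ‖x‖ ^ 2 := by positivity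
    have h2 : (0:ℝ) ≤ 2 * Real.sqrt (2 * Mv) * R * ν₁ := by
      have := Real.sqrt_nonneg (2 * Mv)
      positivity
    have h3 : (0:ℝ) ≤ R ^ 2 * ν₁ := by positivity
    have h4 : (0:ℝ) ≤ 2 * Real.sqrt (2 * Mv) * Mb := by
      have := Real.sqrt_nonneg (2 * Mv)
      positivity
    linarith
  set δ : ℝ := min 1 ((ε / 2 / (A + 1)) ^ 2) with hδdef
  have hδpos : 0 < δ := lt_min one_pos (by positivity)
  have hδ1 : δ ≤ 1 := min_le_left _ _
  have hsd : Real.sqrt δ ≤ ε / 2 / (A + 1) := by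
    calc Real.sqrt δ ≤ Real.sqrt ((ε / 2 / (A + 1)) ^ 2) :=
          Real.sqrt_le_sqrt (min_le_right _ _)
      _ = ε / 2 / (A + 1) := Real.sqrt_sq (by positivity)
  have hds : δ ≤ Real.sqrt δ := by
    have h1 : Real.sqrt δ ≤ 1 := Real.sqrt_le_one.2 hδ1
    nlinarith [Real.sq_sqrt hδpos.le, Real.sqrt_nonneg δ]
  have key := key_bound hγ1 hγ2 ν hν₃ hmom b hMb lam hlam g hgS v hv hMv hC0 hC heq
    δ hδpos R hR1 x
  rw [← hK₁def] at key
  rw [← hν₁def] at key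
  have hsplit : Real.sqrt (2 * Mv * δ) = Real.sqrt (2 * Mv) * Real.sqrt δ :=
    Real.sqrt_mul (by positivity) δ
  have hsq0 : (0:ℝ) ≤ Real.sqrt (2 * Mv) := Real.sqrt_nonneg _
  have hsd0 : (0:ℝ) ≤ Real.sqrt δ := Real.sqrt_nonneg _
  have hb1 : lam * δ * ‖x‖ ^ 2 ≤ Real.sqrt δ * (lam * ‖x‖ ^ 2) := by
    have := mul_le_mul_of_nonneg_right hds (mul_nonneg hlam.le (sq_nonneg ‖x‖))
    nlinarith
  have hb2 : δ * K₁ ≤ Real.sqrt δ * K₁ := mul_le_mul_of_nonneg_right hds hK₁0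
  have hb3 : (2 * Real.sqrt (2 * Mv * δ) * R + δ * R ^ 2) * ν₁
      ≤ Real.sqrt δ * (2 * Real.sqrt (2 * Mv) * R * ν₁ + R ^ 2 * ν₁) := by
    rw [hsplit]
    nlinarith [mul_nonneg (mul_nonneg hν₁0 (sq_nonneg R)) (sub_nonneg.2 hds)]
  have hb4 : 2 * Real.sqrt (2 * Mv * δ) * Mb = Real.sqrt δ * (2 * Real.sqrt (2 * Mv) * Mb) := by
    rw [hsplit]; ring
  have hb5 : 2 * Mv * (ν {y : EuclideanSpace ℝ (Fin d) | R < ‖y‖}).toReal ≤ ε / 2 := by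
    have h2 : (0:ℝ) ≤ (ν {y : EuclideanSpace ℝ (Fin d) | R < ‖y‖}).toReal :=
      ENNReal.toReal_nonneg
    have h3 := mul_le_mul_of_nonneg_left hνR (by linarith : (0:ℝ) ≤ 2 * Mv)
    have h4 : 2 * Mv * (ε / 2 / (2 * Mv + 1)) ≤ ε / 2 := by
      have h5 : 2 * Mv / (2 * Mv + 1) ≤ 1 := by
        rw [div_le_one (by linarith)]; linarith
      have h6 : 2 * Mv * (ε / 2 / (2 * Mv + 1)) = (2 * Mv / (2 * Mv + 1)) * (ε / 2) := by
        ring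
      rw [h6]
      nlinarith
    linarith
  have hb6 : Real.sqrt δ * A ≤ ε / 2 := by
    have h1 := mul_le_mul_of_nonneg_right hsd hA0
    have h2 : ε / 2 / (A + 1) * A ≤ ε / 2 := by
      rw [div_mul_eq_mul_div, div_le_iff₀ (by linarith)]
      nlinarith
    linarith
  have hAexp : Real.sqrt δ * A = Real.sqrt δ * (lam * ‖x‖ ^ 2) + Real.sqrt δ * K₁
      + Real.sqrt δ * (2 * Real.sqrt (2 * Mv) * R * ν₁ + R ^ 2 * ν₁)
      + Real.sqrt δ * (2 * Real.sqrt (2 * Mv) * Mb) := by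
    rw [hAdef]; ring
  linarith [key, hb1, hb2, hb3, hb5, hb6]

/-- maximum principle. If `v ∈ C_b^{1+γ}` solves
`λ v - ℒv - ⟨b, Dv⟩ = g` with `λ > 0`, then `‖v‖_∞ ≤ λ⁻¹ ‖g‖_∞`. -/
theorem maximum_principle
    (d : ℕ) (hd : 1 ≤ d) (γ : ℝ) (hγ : 0 < γ ∧ γ ≤ 1)
    (ν : Measure (EuclideanSpace ℝ (Fin d))) (hν : IsLevyMeasure ν)
    (hmom : (∫⁻ y in {y : EuclideanSpace ℝ (Fin d) | ‖y‖ ≤ 1},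
      ENNReal.ofReal (‖y‖ ^ (1 + γ)) ∂ν) < ⊤)
    (b : EuclideanSpace ℝ (Fin d) → EuclideanSpace ℝ (Fin d))
    (hbC : Continuous b) (hbB : ∃ M, ∀ x, ‖b x‖ ≤ M)
    (lam : ℝ) (hlam : 0 < lam)
    (g : EuclideanSpace ℝ (Fin d) → ℝ)
    (hgC : Continuous g) (hgB : ∃ M, ∀ x, |g x| ≤ M)
    (v : EuclideanSpace ℝ (Fin d) → ℝ)
    (hv : ContDiff ℝ 1 v) (hvb : ∃ M, ∀ x, |v x| ≤ M)
    (hDvb : ∃ M, ∀ x, ‖fderiv ℝ v x‖ ≤ M)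
    (hDvH : ∃ C, 0 ≤ C ∧ ∀ x y, ‖fderiv ℝ v x - fderiv ℝ v y‖ ≤ C * ‖x - y‖ ^ γ)
    (heq : ∀ x, lam * v x - nonlocalOp ν v x - fderiv ℝ v x (b x) = g x) :
    ∀ x, |v x| ≤ (1 / lam) * ⨆ x, |g x| := by
  have hν₃ : (∫⁻ y, ENNReal.ofReal (min 1 (‖y‖ ^ 2)) ∂ν) < ⊤ := hν.2.2
  have h1 := one_side hγ.1 hγ.2 ν hν₃ hmom b hbB lam hlam g hgB v hv hvb hDvH heq
  -- the negated solution
  have hfneg : ∀ x, fderiv ℝ (fun z => -v z) x = -fderiv ℝ v x := fun x => fderiv_neg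
  have hDvH' : ∃ C, 0 ≤ C ∧ ∀ x y, ‖fderiv ℝ (fun z => -v z) x
      - fderiv ℝ (fun z => -v z) y‖ ≤ C * ‖x - y‖ ^ γ := by
    obtain ⟨C, hC0, hC⟩ := hDvH
    refine ⟨C, hC0, fun x y => ?_⟩
    rw [hfneg, hfneg]
    calc ‖-fderiv ℝ v x - -fderiv ℝ v y‖ = ‖fderiv ℝ v x - fderiv ℝ v y‖ := by
          rw [← norm_neg]; congr 1; abel
      _ ≤ C * ‖x - y‖ ^ γ := hC x y
  have hnl : ∀ x, nonlocalOp ν (fun z => -v z) x = -nonlocalOp ν v x := by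
    intro x
    simp only [nonlocalOp]
    rw [← integral_neg]
    congr 1
    funext y
    rw [hfneg]
    by_cases hy : y ∈ {y : EuclideanSpace ℝ (Fin d) | ‖y‖ ≤ 1}
    · rw [Set.indicator_of_mem hy, Set.indicator_of_mem hy]
      simp only [ContinuousLinearMap.neg_apply]
      ring
    · rw [Set.indicator_of_notMem hy, Set.indicator_of_notMem hy]
      ring
  have heq' : ∀ x, lam * (-v x) - nonlocalOp ν (fun z => -v z) x
      - fderiv ℝ (fun z => -v z) x (b x) = -g x := by
    intro x
    rw [hnl, hfneg]
    simp only [ContinuousLinearMap.neg_apply]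
    have := heq x
    linarith
  have h2 := one_side hγ.1 hγ.2 ν hν₃ hmom b hbB lam hlam (fun x => -g x)
    (by obtain ⟨M, hM⟩ := hgB; exact ⟨M, fun x => by rw [abs_neg]; exact hM x⟩)
    (fun z => -v z) hv.neg
    (by obtain ⟨M, hM⟩ := hvb; exact ⟨M, fun x => by rw [abs_neg]; exact hM x⟩)
    hDvH' heq'
  have hsup : (⨆ x, |-g x|) = ⨆ x, |g x| := by
    congr 1
    funext z
    rw [abs_neg]
  rw [hsup] at h2
  intro x
  have ha := h1 x
  have hb := h2 x
  have hinv : lam * (1 / lam) = 1 := by field_simp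
  rw [abs_le]
  set S : ℝ := ⨆ x, |g x| with hSdef
  have h3 : lam * (1 / lam * S) = S := by
    rw [← mul_assoc, hinv, one_mul]
  constructor
  · nlinarith [mul_le_mul_of_nonneg_left hb (le_of_lt hlam)]
  · nlinarith [mul_le_mul_of_nonneg_left ha (le_of_lt hlam)]
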